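/- Let A be an associative topological algebra over 𝕜 ∈ {ℝ, ℂ} (a topological vector space with separately continuous multiplication) which is locally convex. Suppose A admits a base 𝒰 of absolutely convex (i.e. convex and balanced) neighborhoods of 0 with the property that for each V ∈ 𝒰 there exist U ∈ 𝒰 and a constant C > 0 such that U·V ⊆ C•V, where U·V = {uv : u ∈ U, v ∈ V}. Then A is locally multiplicatively convex: its topology can be defined by a family of submultiplicative seminorms, i.e. seminorms ρ satisfying ρ(ab) ≤ ρ(a)ρ(b) for all a, b ∈ A. -/

import Mathlib

open Filter Pointwise Set Topology

private lemma aux0 {a X M : ℝ} (hM : 0 ≤ M) (h : ∀ δ > 0, a ≤ X + M * δ) : a ≤ X := by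
  by_contra h'
  push_neg at h'
  have hδ : (0:ℝ) < (a - X) / (2 * (M + 1)) := div_pos (by linarith) (by positivity)
  have h2 := h _ hδ
  have h3 : M * ((a - X) / (2 * (M + 1))) < a - X := by
    rw [mul_div_assoc']
    rw [div_lt_iff₀ (by positivity)]
    nlinarith
  linarith

private lemma aux1 {a K b c : ℝ} (hK : 0 ≤ K) (hb : 0 ≤ b) (hc : 0 ≤ c)
    (h : ∀ ε > 0, ∀ δ > 0, a ≤ K * (b + ε) * (c + δ)) : a ≤ K * b * c := by
  have h1 : ∀ ε > 0, a ≤ K * (b + ε) * c := by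
    intro ε hε
    refine aux0 (M := K * (b + ε)) (by positivity) fun δ hδ => ?_
    calc a ≤ K * (b + ε) * (c + δ) := h ε hε δ hδ
      _ = K * (b + ε) * c + K * (b + ε) * δ := by ring
  refine aux0 (M := K * c) (by positivity) fun ε hε => ?_
  calc a ≤ K * (b + ε) * c := h1 ε hε
    _ = K * b * c + K * c * ε := by ring

private lemma norm_ofReal_inv_smul {𝕜 : Type} [RCLike 𝕜] {r : ℝ} (hr : 0 < r) :
    ‖(((r : ℝ) : 𝕜))⁻¹‖ = r⁻¹ := by
  rw [norm_inv, RCLike.norm_ofReal, abs_of_pos hr]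

private lemma core {𝕜 A : Type} [RCLike 𝕜] [Ring A] [Algebra 𝕜 A]
    (μ ν : Seminorm 𝕜 A) (C : ℝ) (hC : 0 ≤ C)
    (key : ∀ x y : A, μ (x * y) ≤ C * ν x * μ y) :
    ∃ q : Seminorm 𝕜 A, (∀ a b : A, q (a * b) ≤ q a * q b) ∧
      (∀ x, q x ≤ C * ν x) ∧ (∀ x, μ x ≤ max 1 (μ 1) * q x) := by
  set S : A → Set ℝ := fun x => (fun y => μ (x * y)) '' {y | μ y ≤ 1} with hSdef
  have hne : ∀ x, (S x).Nonempty := fun x => ⟨μ (x * 0), 0, by simp, rfl⟩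
  have hbdd : ∀ x, BddAbove (S x) := by
    intro x
    refine ⟨C * ν x, ?_⟩
    rintro r ⟨y, hy, rfl⟩
    calc μ (x * y) ≤ C * ν x * μ y := key x y
      _ ≤ C * ν x * 1 := by
          have : (0:ℝ) ≤ C * ν x := by positivity
          exact mul_le_mul_of_nonneg_left hy this
      _ = C * ν x := mul_one _
  set f : A → ℝ := fun x => sSup (S x) with hfdef
  have hmem : ∀ x y, μ y ≤ 1 → μ (x * y) ≤ f x := fun x y hy => le_csSup (hbdd x) ⟨y, hy, rfl⟩
  have hub : ∀ x (b : ℝ), (∀ y, μ y ≤ 1 → μ (x * y) ≤ b) → f x ≤ b := by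
    intro x b h
    refine csSup_le (hne x) ?_
    rintro r ⟨y, hy, rfl⟩
    exact h y hy
  have hf0 : ∀ x, 0 ≤ f x := fun x => (apply_nonneg μ (x * 0)).trans (hmem x 0 (by simp))
  have hfzero : f 0 = 0 := le_antisymm (hub 0 0 fun y _ => by simp) (hf0 0)
  have hfadd : ∀ x z, f (x + z) ≤ f x + f z := by
    intro x z
    refine hub _ _ fun y hy => ?_
    calc μ ((x + z) * y) = μ (x * y + z * y) := by rw [add_mul]
      _ ≤ μ (x * y) + μ (z * y) := map_add_le_add μ _ _
      _ ≤ f x + f z := add_le_add (hmem x y hy) (hmem z y hy)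
  have hfsmul : ∀ (a : 𝕜) (x : A), f (a • x) ≤ ‖a‖ * f x := by
    intro a x
    refine hub _ _ fun y hy => ?_
    calc μ (a • x * y) = μ (a • (x * y)) := by rw [smul_mul_assoc]
      _ = ‖a‖ * μ (x * y) := map_smul_eq_mul μ a _
      _ ≤ ‖a‖ * f x := mul_le_mul_of_nonneg_left (hmem x y hy) (norm_nonneg a)
  refine ⟨Seminorm.ofSMulLE f hfzero hfadd hfsmul, ?_, ?_, ?_⟩
  · -- submultiplicative
    intro x z
    show f (x * z) ≤ f x * f z
    refine hub _ _ fun y hy => ?_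
    rw [mul_assoc]
    set w := z * y with hw
    have hwz : μ w ≤ f z := hmem z y hy
    rcases eq_or_lt_of_le (apply_nonneg μ w) with h0 | hpos
    · -- μ w = 0
      have : μ (x * w) ≤ C * ν x * μ w := key x w
      rw [← h0, mul_zero] at this
      exact this.trans (mul_nonneg (hf0 x) (hf0 z))
    · -- μ w > 0
      set t : 𝕜 := (((μ w : ℝ) : 𝕜))⁻¹ with ht
      have hnt : ‖t‖ = (μ w)⁻¹ := norm_ofReal_inv_smul hpos
      have hμt : μ (t • w) ≤ 1 := by
        rw [map_smul_eq_mul, hnt, inv_mul_cancel₀ hpos.ne']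
      have h1 : μ (x * (t • w)) ≤ f x := hmem x _ hμt
      rw [mul_smul_comm, map_smul_eq_mul, hnt] at h1
      have h2 : μ (x * w) ≤ μ w * f x := by
        rwa [inv_mul_le_iff₀ hpos] at h1
      calc μ (x * w) ≤ μ w * f x := h2
        _ ≤ f z * f x := mul_le_mul_of_nonneg_right hwz (hf0 x)
        _ = f x * f z := mul_comm _ _
  · -- f ≤ C ν
    intro x
    refine hub _ _ fun y hy => ?_
    calc μ (x * y) ≤ C * ν x * μ y := key x y
      _ ≤ C * ν x * 1 := mul_le_mul_of_nonneg_left hy (by positivity)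
      _ = C * ν x := mul_one _
  · -- μ ≤ K f
    intro x
    set m := μ 1 with hm
    rcases le_or_gt m 1 with hle | hgt
    · have h1 : μ x = μ (x * 1) := by rw [mul_one]
      have h2 : μ x ≤ f x := by rw [h1]; exact hmem x 1 hle
      calc μ x ≤ f x := h2
        _ = 1 * f x := (one_mul _).symm
        _ ≤ max 1 m * f x := mul_le_mul_of_nonneg_right (le_max_left _ _) (hf0 x)
    · have hmpos : 0 < m := lt_trans one_pos hgt
      set t : 𝕜 := (((m : ℝ) : 𝕜))⁻¹ with ht
      have hnt : ‖t‖ = m⁻¹ := norm_ofReal_inv_smul hmpos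
      have hμt : μ (t • (1:A)) ≤ 1 := by
        rw [map_smul_eq_mul, hnt, hm, inv_mul_cancel₀ hmpos.ne']
      have h1 : μ (x * (t • 1)) ≤ f x := hmem x _ hμt
      rw [mul_smul_comm, mul_one, map_smul_eq_mul, hnt] at h1
      have h2 : μ x ≤ m * f x := by rwa [inv_mul_le_iff₀ hmpos] at h1
      calc μ x ≤ m * f x := h2
        _ ≤ max 1 m * f x := mul_le_mul_of_nonneg_right (le_max_right _ _) (hf0 x)



open Filter Pointwise

/-- Let `A` be a locally convex associative topological algebra over
`𝕜 ∈ {ℝ, ℂ}` (separately continuous multiplication).  If `A` admits a base `𝒰` of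
absolutely convex (convex and balanced) neighborhoods of `0` such that for each
`V ∈ 𝒰` there are `U ∈ 𝒰` and `C > 0` with `U·V ⊆ C•V`, then `A` is locally
multiplicatively convex: its topology is defined by a family of submultiplicative
seminorms. -/
theorem statement11 (𝕜 : Type) [RCLike 𝕜]
    (A : Type) [Ring A] [Algebra 𝕜 A]
    [Module ℝ A] [IsScalarTower ℝ 𝕜 A]
    [TopologicalSpace A] [IsTopologicalAddGroup A] [ContinuousSMul 𝕜 A]
    (hmul_left : ∀ a : A, Continuous fun b : A => a * b)
    (hmul_right : ∀ b : A, Continuous fun a : A => a * b)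
    (𝒰 : Set (Set A))
    (hbasis : (nhds (0 : A)).HasBasis (fun U : Set A => U ∈ 𝒰) id)
    (hconv : ∀ U ∈ 𝒰, Convex ℝ U)
    (hbal : ∀ U ∈ 𝒰, Balanced 𝕜 U)
    (habs : ∀ V ∈ 𝒰, ∃ U ∈ 𝒰, ∃ C : ℝ, 0 < C ∧
      Set.image2 (fun u v : A => u * v) U V ⊆ (C • V : Set A)) :
    ∃ (s : Set (Seminorm 𝕜 A)) (hs : s.Nonempty),
      (∀ p ∈ s, ∀ a b : A, p (a * b) ≤ p a * p b) ∧
      (letI : Nonempty s := hs.to_subtype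
       WithSeminorms (fun p : s => (p : Seminorm 𝕜 A))) := by
  haveI : ContinuousSMul ℝ A := ⟨by
    have hfun : (fun p : ℝ × A => p.1 • p.2) = fun p : ℝ × A => ((p.1 : 𝕜)) • p.2 := by
      funext p
      rw [RCLike.real_smul_eq_coe_smul (K := 𝕜)]
    rw [hfun]
    exact (RCLike.continuous_ofReal.comp continuous_fst).smul continuous_snd⟩
  have rsmul_mul : ∀ (c : ℝ) (a b : A), (c • a) * b = c • (a * b) := by
    intro c a b
    rw [RCLike.real_smul_eq_coe_smul (K := 𝕜) c, RCLike.real_smul_eq_coe_smul (K := 𝕜) c,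
      smul_mul_assoc]
  have mul_rsmul : ∀ (c : ℝ) (a b : A), a * (c • b) = c • (a * b) := by
    intro c a b
    rw [RCLike.real_smul_eq_coe_smul (K := 𝕜) c, RCLike.real_smul_eq_coe_smul (K := 𝕜) c,
      mul_smul_comm]
  have hset : ∀ (t : ℝ) (S : Set A), t • S = ((t : 𝕜)) • S := by
    intro t S
    ext x
    simp only [Set.mem_smul_set]
    refine exists_congr fun u => and_congr_right fun _ => ?_
    rw [RCLike.real_smul_eq_coe_smul (K := 𝕜)]
  have claim : ∀ V, V ∈ 𝒰 → ∃ q : Seminorm 𝕜 A,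
      (∀ a b : A, q (a * b) ≤ q a * q b) ∧ (∀ r > 0, (q.ball 0 r) ∈ 𝓝 (0 : A)) ∧
      (∃ r > 0, q.ball 0 r ⊆ V) := by
    intro V hV
    obtain ⟨U, hU, C, hC, hprod⟩ := habs V hV
    have hVn : V ∈ 𝓝 (0 : A) := hbasis.mem_of_mem hV
    have hUn : U ∈ 𝓝 (0 : A) := hbasis.mem_of_mem hU
    have habsV : Absorbent ℝ V := absorbent_nhds_zero hVn
    have habsU : Absorbent ℝ U := absorbent_nhds_zero hUn
    set μ : Seminorm 𝕜 A := gaugeSeminorm (hbal V hV) (hconv V hV) habsV with hμ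
    set ν : Seminorm 𝕜 A := gaugeSeminorm (hbal U hU) (hconv U hU) habsU with hν
    have hμx : ∀ x, μ x = gauge V x := fun x => rfl
    have hνx : ∀ x, ν x = gauge U x := fun x => rfl
    have key : ∀ x y : A, μ (x * y) ≤ C * ν x * μ y := by
      intro x y
      refine aux1 hC.le (apply_nonneg ν x) (apply_nonneg μ y) ?_
      intro ε hε δ hδ
      obtain ⟨r, hr0, hrlt, hx⟩ := exists_lt_of_gauge_lt habsU
        (show gauge U x < ν x + ε by rw [← hνx]; exact lt_add_of_pos_right _ hε)
      obtain ⟨t, ht0, htlt, hy⟩ := exists_lt_of_gauge_lt habsV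
        (show gauge V y < μ y + δ by rw [← hμx]; exact lt_add_of_pos_right _ hδ)
      obtain ⟨u, hu, hux0⟩ := hx
      obtain ⟨v, hv, hvy0⟩ := hy
      have hux : r • u = x := hux0
      have hvy : t • v = y := hvy0
      have huv : u * v ∈ (C • V : Set A) := hprod (Set.mem_image2_of_mem hu hv)
      obtain ⟨w, hw, hwe0⟩ := huv
      have hwe : C • w = u * v := hwe0
      have hxy : x * y = (r * t * C) • w := by
        calc x * y = (r • u) * (t • v) := by rw [hux, hvy]
          _ = r • (u * (t • v)) := rsmul_mul _ _ _
          _ = r • (t • (u * v)) := by rw [mul_rsmul]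
          _ = r • (t • (C • w)) := by rw [hwe]
          _ = (r * t * C) • w := by rw [smul_smul, smul_smul]
      calc μ (x * y) = gauge V (x * y) := hμx _
        _ ≤ r * t * C := gauge_le_of_mem (by positivity)
            (by rw [hxy]; exact Set.smul_mem_smul_set hw)
        _ ≤ C * (ν x + ε) * (μ y + δ) := by
            have h1 : r * t ≤ (ν x + ε) * (μ y + δ) :=
              (mul_lt_mul'' hrlt htlt hr0.le ht0.le).le
            calc r * t * C = C * (r * t) := by ring
              _ ≤ C * ((ν x + ε) * (μ y + δ)) := mul_le_mul_of_nonneg_left h1 hC.le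
              _ = C * (ν x + ε) * (μ y + δ) := by ring
    obtain ⟨q, hqsub, hqle, hqK⟩ := core μ ν C hC.le key
    set K := max 1 (μ 1) with hKdef
    have hK0 : (0 : ℝ) < K := lt_of_lt_of_le one_pos (le_max_left _ _)
    refine ⟨q, hqsub, ?_, ⟨K⁻¹, inv_pos.mpr hK0, ?_⟩⟩
    · intro r hr
      set t : ℝ := r / (2 * (C + 1)) with htdef
      have ht0 : 0 < t := by positivity
      have hr_eq : 2 * (C + 1) * t = r := by rw [htdef]; field_simp
      have hct : C * t < r := by nlinarith [mul_pos hC ht0]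
      have hsub : (t • U : Set A) ⊆ q.ball 0 r := by
        rintro x ⟨u, hu, rfl⟩
        rw [Seminorm.mem_ball_zero]
        have h1 : q (t • u) ≤ C * ν (t • u) := hqle _
        have h2 : ν (t • u) ≤ t := by
          rw [hνx]
          exact gauge_le_of_mem ht0.le (Set.smul_mem_smul_set hu)
        have h3 : C * ν (t • u) ≤ C * t := mul_le_mul_of_nonneg_left h2 hC.le
        linarith
      refine Filter.mem_of_superset ?_ hsub
      rw [hset t U]
      refine (set_smul_mem_nhds_zero_iff ?_).mpr hUn
      intro h
      exact ht0.ne' (by exact_mod_cast h)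
    · intro x hx
      rw [Seminorm.mem_ball_zero] at hx
      have h1 : μ x < 1 := by
        have hKx := hqK x
        have h2 : K * q x < K * K⁻¹ := mul_lt_mul_of_pos_left hx hK0
        rw [mul_inv_cancel₀ hK0.ne'] at h2
        linarith
      have h2 : gauge V x < 1 := by rw [← hμx]; exact h1
      exact gauge_lt_one_subset_self (hconv V hV) (mem_of_mem_nhds hVn) habsV h2
  choose Q hQsub hQnhds hQball using claim
  have hs_ne : {p : Seminorm 𝕜 A | ∃ V, ∃ hV : V ∈ 𝒰, p = Q V hV}.Nonempty := by
    obtain ⟨V, hV, -⟩ := hbasis.mem_iff.mp Filter.univ_mem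
    exact ⟨Q V hV, V, hV, rfl⟩
  refine ⟨{p : Seminorm 𝕜 A | ∃ V, ∃ hV : V ∈ 𝒰, p = Q V hV}, hs_ne, ?_, ?_⟩
  · rintro p ⟨V, hV, rfl⟩ a b
    exact hQsub V hV a b
  · haveI : Nonempty {p : Seminorm 𝕜 A | ∃ V, ∃ hV : V ∈ 𝒰, p = Q V hV} := hs_ne.to_subtype
    refine SeminormFamily.withSeminorms_of_hasBasis _ ?_
    refine hbasis.to_hasBasis (fun V hV => ?_) (fun W hW => ?_)
    · obtain ⟨r, hr, hsubset⟩ := hQball V hV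
      refine ⟨(Q V hV).ball 0 r, ?_, hsubset⟩
      exact SeminormFamily.basisSets_singleton_mem _
        (⟨Q V hV, ⟨V, hV, rfl⟩⟩ : {p : Seminorm 𝕜 A | ∃ V, ∃ hV : V ∈ 𝒰, p = Q V hV}) hr
    · rw [SeminormFamily.basisSets_iff] at hW
      obtain ⟨F, r, hr, rfl⟩ := hW
      have hmem : (F.sup (fun p : {p : Seminorm 𝕜 A | ∃ V, ∃ hV : V ∈ 𝒰, p = Q V hV} =>
          (p : Seminorm 𝕜 A))).ball 0 r ∈ 𝓝 (0 : A) := by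
        rw [Seminorm.ball_finset_sup_eq_iInter _ _ _ hr]
        refine (Filter.biInter_finset_mem _).mpr fun i _ => ?_
        obtain ⟨V, hV, hpi⟩ := i.2
        rw [hpi]
        exact hQnhds V hV r hr
      obtain ⟨V, hV, hVsub⟩ := hbasis.mem_iff.mp hmem
      exact ⟨V, hV, hVsub⟩
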